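/- arXiv:2101.08298 — 2 statements merged into one kernel-verified Lean document; each statement's English description precedes it below -/
import Mathlib

section
/- There exists an absolute constant C > 0 with the following property. Let n, s be positive integers with n ≥ e·s, let λ > 0, and let z₁, …, z_n be real-valued random variables on a common probability space (not necessarily independent and not necessarily identically distributed) such that each z_i is centered (E[z_i] = 0), has variance 1, and satisfies ‖z_i‖_{L^p} ≤ λ√p for every real p with 2 ≤ p ≤ 2·log(n/s). Then (E[Σ_{i=1}^s (z_i*)²])^{1/2} ≤ C·λ·√(s·log(n/s)), where z_i* denotes the i-th largest value among |z₁|, …, |z_n|. -/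
open MeasureTheory ProbabilityTheory Finset

/-- The `i`-th coordinate of the non-increasing rearrangement of the absolute
values of the coordinates of `w`, i.e. the `(i+1)`-th largest among `|w 0|, …, |w (n-1)|`. -/
noncomputable def decRearrange {n : ℕ} (w : Fin n → ℝ) : Fin n → ℝ :=
  fun i => |w ((Tuple.sort fun j => -|w j|) i)|

lemma sum_rpow_le_card_rpow_mul {ι : Type*} (t : Finset ι) (b : ι → ℝ)
    (hb : ∀ i ∈ t, 0 ≤ b i) {c : ℝ} (hc0 : 0 < c) (hc1 : c ≤ 1) :
    ∑ i ∈ t, b i ^ c ≤ (t.card : ℝ) ^ (1 - c) * (∑ i ∈ t, b i) ^ c := by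
  rcases t.eq_empty_or_nonempty with rfl | ht
  · simp [Real.zero_rpow (ne_of_gt hc0)]
  have hcard : (0 : ℝ) < t.card := by exact_mod_cast ht.card_pos
  have hsum : 0 ≤ ∑ i ∈ t, b i := Finset.sum_nonneg hb
  have key := Real.arith_mean_le_rpow_mean t (fun _ => (t.card : ℝ)⁻¹)
      (fun i => b i ^ c) (fun i _ => by positivity)
      (by rw [Finset.sum_const, nsmul_eq_mul]; field_simp)
      (fun i hi => Real.rpow_nonneg (hb i hi) c)
      (p := 1 / c) (by rw [le_div_iff₀ hc0]; linarith)
  have key' : (t.card : ℝ)⁻¹ * ∑ i ∈ t, b i ^ c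
      ≤ ((t.card : ℝ)⁻¹ * ∑ i ∈ t, b i) ^ c := by
    calc (t.card : ℝ)⁻¹ * ∑ i ∈ t, b i ^ c
        = ∑ i ∈ t, (t.card : ℝ)⁻¹ * b i ^ c := by rw [Finset.mul_sum]
      _ ≤ (∑ i ∈ t, (t.card : ℝ)⁻¹ * (b i ^ c) ^ (1 / c)) ^ (1 / (1 / c)) := key
      _ = ((t.card : ℝ)⁻¹ * ∑ i ∈ t, b i) ^ c := by
          rw [one_div_one_div,
            Finset.sum_congr rfl (fun i hi => by
              rw [← Real.rpow_mul (hb i hi), mul_one_div, div_self (ne_of_gt hc0),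
                Real.rpow_one]),
            ← Finset.mul_sum]
  have h2 : ((t.card : ℝ)⁻¹ * ∑ i ∈ t, b i) ^ c
      = ((t.card : ℝ)⁻¹) ^ c * (∑ i ∈ t, b i) ^ c :=
    Real.mul_rpow (by positivity) hsum
  rw [h2] at key'
  have key2 := mul_le_mul_of_nonneg_left key' (le_of_lt hcard)
  calc ∑ i ∈ t, b i ^ c = (t.card : ℝ) * ((t.card : ℝ)⁻¹ * ∑ i ∈ t, b i ^ c) := by
        field_simp
    _ ≤ (t.card : ℝ) * (((t.card : ℝ)⁻¹) ^ c * (∑ i ∈ t, b i) ^ c) := key2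
    _ = (t.card : ℝ) ^ (1 - c) * (∑ i ∈ t, b i) ^ c := by
        rw [← mul_assoc, Real.rpow_sub hcard, Real.rpow_one,
          Real.inv_rpow (le_of_lt hcard), ← Real.rpow_neg (le_of_lt hcard),
          div_eq_mul_inv, ← Real.rpow_neg (le_of_lt hcard)]

lemma integrable_rpow_of_le_one {Ω : Type*} [MeasurableSpace Ω] {μ : Measure Ω}
    [IsProbabilityMeasure μ] {Y : Ω → ℝ} (hY : ∀ ω, 0 ≤ Y ω) (hmeas : Measurable Y)
    (hi : Integrable Y μ) {c : ℝ} (hc0 : 0 < c) (hc1 : c ≤ 1) :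
    Integrable (fun ω => Y ω ^ c) μ := by
  refine Integrable.mono' (g := fun ω => 1 + Y ω)
    ((integrable_const 1).add hi)
    (hmeas.pow_const c).aestronglyMeasurable
    (ae_of_all _ fun ω => ?_)
  rw [Real.norm_eq_abs, abs_of_nonneg (Real.rpow_nonneg (hY ω) c)]
  show Y ω ^ c ≤ 1 + Y ω
  rcases le_total (Y ω) 1 with h | h
  · have := Real.rpow_le_one (hY ω) h (le_of_lt hc0)
    linarith [hY ω]
  · have := Real.rpow_le_rpow_of_exponent_le h hc1
    rw [Real.rpow_one] at this
    linarith

lemma integral_rpow_le_rpow_integral {Ω : Type*} [MeasurableSpace Ω] {μ : Measure Ω}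
    [IsProbabilityMeasure μ] {Y : Ω → ℝ} (hY : ∀ ω, 0 ≤ Y ω) (hmeas : Measurable Y)
    (hi : Integrable Y μ) {c : ℝ} (hc0 : 0 < c) (hc1 : c ≤ 1) :
    ∫ ω, Y ω ^ c ∂μ ≤ (∫ ω, Y ω ∂μ) ^ c := by
  have hconc : ConcaveOn ℝ (Set.Ici 0) (fun x : ℝ => x ^ c) :=
    Real.concaveOn_rpow (le_of_lt hc0) hc1
  have hcont : ContinuousOn (fun x : ℝ => x ^ c) (Set.Ici 0) := fun x _ =>
    (Real.continuousAt_rpow_const x c (Or.inr (le_of_lt hc0))).continuousWithinAt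
  exact hconc.le_map_integral hcont isClosed_Ici (ae_of_all _ fun ω => hY ω) hi
    (integrable_rpow_of_le_one hY hmeas hi hc0 hc1)

lemma moment_bound {Ω : Type*} [MeasurableSpace Ω] {μ : Measure Ω}
    [IsProbabilityMeasure μ] {f : Ω → ℝ} (hf : Measurable f) {q B : ℝ}
    (hq : 0 < q) (hB : 0 ≤ B)
    (h : eLpNorm f (ENNReal.ofReal q) μ ≤ ENNReal.ofReal B) :
    Integrable (fun ω => |f ω| ^ q) μ ∧ ∫ ω, |f ω| ^ q ∂μ ≤ B ^ q := by
  have hp1 : ENNReal.ofReal q ≠ 0 := by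
    simp [ENNReal.ofReal_eq_zero, not_le, hq]
  have hp2 : ENNReal.ofReal q ≠ ⊤ := ENNReal.ofReal_ne_top
  have hmem : MemLp f (ENNReal.ofReal q) μ :=
    ⟨hf.aestronglyMeasurable, lt_of_le_of_lt h ENNReal.ofReal_lt_top⟩
  have hint : Integrable (fun ω => |f ω| ^ q) μ := by
    have := hmem.integrable_norm_rpow hp1 hp2
    simpa [Real.norm_eq_abs, ENNReal.toReal_ofReal hq.le] using this
  refine ⟨hint, ?_⟩
  rw [hmem.eLpNorm_eq_integral_rpow_norm hp1 hp2] at h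
  simp only [Real.norm_eq_abs, ENNReal.toReal_ofReal hq.le] at h
  rw [ENNReal.ofReal_le_ofReal_iff hB] at h
  have hInn : 0 ≤ ∫ ω, |f ω| ^ q ∂μ :=
    integral_nonneg fun ω => Real.rpow_nonneg (abs_nonneg _) q
  have := Real.rpow_le_rpow (Real.rpow_nonneg hInn _) h hq.le
  rwa [Real.rpow_inv_rpow hInn (ne_of_gt hq)] at this

lemma pointwise_bound {n s : ℕ} (w : Fin n → ℝ) {q : ℝ} (hq : 2 ≤ q) :
    ∑ i ∈ Finset.univ.filter (fun i : Fin n => (i : ℕ) < s), (decRearrange w i) ^ 2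
      ≤ (s : ℝ) ^ (1 - 2 / q) * (∑ j, |w j| ^ q) ^ (2 / q) := by
  have hq0 : 0 < q := by linarith
  set c := 2 / q with hc
  have hc0 : 0 < c := by positivity
  have hc1 : c ≤ 1 := by rw [hc, div_le_one hq0]; linarith
  set T := Finset.univ.filter (fun i : Fin n => (i : ℕ) < s) with hT
  have ha : ∀ i, 0 ≤ decRearrange w i := fun i => abs_nonneg _
  have step1 : ∀ i : Fin n, (decRearrange w i) ^ 2 = (decRearrange w i ^ q) ^ c := by
    intro i
    rw [← Real.rpow_mul (ha i)]
    have : q * c = 2 := by rw [hc]; field_simp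
    rw [this]
    rw [← Real.rpow_natCast (decRearrange w i) 2]
    norm_num
  have hsumT : ∑ i ∈ T, decRearrange w i ^ q ≤ ∑ j, |w j| ^ q := by
    have hperm : ∑ i : Fin n, decRearrange w i ^ q = ∑ j, |w j| ^ q := by
      simp only [decRearrange]
      exact Equiv.sum_comp (Tuple.sort fun j => -|w j|) (fun j => |w j| ^ q)
    rw [← hperm]
    exact Finset.sum_le_sum_of_subset_of_nonneg (Finset.filter_subset _ _)
      (fun i _ _ => Real.rpow_nonneg (ha i) q)
  have hcard : ((T.card : ℝ)) ≤ s := by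
    have : T.card ≤ (Finset.range s).card := by
      refine Finset.card_le_card_of_injOn (fun i => (i : ℕ)) ?_ ?_
      · intro i hi
        exact Finset.mem_range.mpr (Finset.mem_filter.mp hi).2
      · intro i _ j _ h
        exact Fin.val_injective h
    rw [Finset.card_range] at this
    exact_mod_cast this
  have hYnn : 0 ≤ ∑ j, |w j| ^ q :=
    Finset.sum_nonneg fun j _ => Real.rpow_nonneg (abs_nonneg _) q
  calc ∑ i ∈ T, (decRearrange w i) ^ 2
      = ∑ i ∈ T, (decRearrange w i ^ q) ^ c :=
        Finset.sum_congr rfl fun i _ => step1 i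
    _ ≤ (T.card : ℝ) ^ (1 - c) * (∑ i ∈ T, decRearrange w i ^ q) ^ c :=
        sum_rpow_le_card_rpow_mul T _ (fun i _ => Real.rpow_nonneg (ha i) q) hc0 hc1
    _ ≤ (s : ℝ) ^ (1 - c) * (∑ j, |w j| ^ q) ^ c := by
        apply mul_le_mul
        · exact Real.rpow_le_rpow (by positivity) hcard (by linarith)
        · exact Real.rpow_le_rpow (Finset.sum_nonneg fun i _ =>
            Real.rpow_nonneg (ha i) q) hsumT (le_of_lt hc0)
        · exact Real.rpow_nonneg (Finset.sum_nonneg fun i _ =>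
            Real.rpow_nonneg (ha i) q) c
        · exact Real.rpow_nonneg (by positivity) _

/-- Generalization of Mendelson's Lemma 6.5: a bound on the expected
sum of squares of the `s` largest coordinates of a random vector with `2 log(n/s)`
well-behaved moments, without independence or identical distribution assumptions. -/
theorem stmt0 :
    ∃ C : ℝ, 0 < C ∧
      ∀ (n s : ℕ), 0 < n → 0 < s → Real.exp 1 * s ≤ n →
      ∀ lam : ℝ, 0 < lam →
      ∀ (Ω : Type) (_ : MeasurableSpace Ω) (μ : Measure Ω), IsProbabilityMeasure μ →
      ∀ z : Fin n → Ω → ℝ,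
        (∀ i, Measurable (z i)) →
        (∀ i, ∫ ω, z i ω ∂μ = 0) →
        (∀ i, ∫ ω, (z i ω) ^ 2 ∂μ = 1) →
        (∀ i, ∀ p : ℝ, 2 ≤ p → p ≤ 2 * Real.log (n / s) →
          eLpNorm (z i) (ENNReal.ofReal p) μ ≤ ENNReal.ofReal (lam * Real.sqrt p)) →
        (∫ ω, ∑ i ∈ Finset.univ.filter (fun i : Fin n => (i : ℕ) < s),
            (decRearrange (fun j => z j ω) i) ^ 2 ∂μ) ^ ((1 : ℝ) / 2)
          ≤ C * lam * Real.sqrt (s * Real.log (n / s)) := by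
  refine ⟨4, by norm_num, ?_⟩
  intro n s hn hs hns lam hlam Ω mΩ μ hμ z hzm hmean hvar hmom
  have hs0 : (0 : ℝ) < s := by exact_mod_cast hs
  have hn0 : (0 : ℝ) < n := by exact_mod_cast hn
  set L := Real.log ((n : ℝ) / s) with hL
  have hratio : Real.exp 1 ≤ (n : ℝ) / s := by
    rw [le_div_iff₀ hs0]; exact hns
  have hL1 : 1 ≤ L := by
    rw [hL, ← Real.log_exp 1]
    exact Real.log_le_log (Real.exp_pos 1) hratio
  set q := 2 * L with hq
  have hq2 : 2 ≤ q := by rw [hq]; linarith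
  have hq0 : 0 < q := by linarith
  set c := 2 / q with hc
  have hc0 : 0 < c := by positivity
  have hc1 : c ≤ 1 := by rw [hc, div_le_one hq0]; linarith
  set B := lam * Real.sqrt q with hBdef
  have hB : 0 ≤ B := by positivity
  have hmom' : ∀ j : Fin n, Integrable (fun ω => |z j ω| ^ q) μ ∧
      ∫ ω, |z j ω| ^ q ∂μ ≤ B ^ q :=
    fun j => moment_bound (hzm j) hq0 hB (hmom j q hq2 le_rfl)
  set Y : Ω → ℝ := fun ω => ∑ j, |z j ω| ^ q with hYdef
  have hYnn : ∀ ω, 0 ≤ Y ω :=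
    fun ω => Finset.sum_nonneg fun j _ => Real.rpow_nonneg (abs_nonneg _) q
  have hYmeas : Measurable Y :=
    Finset.measurable_sum _ fun j _ => ((hzm j).abs).pow_const q
  have hYint : Integrable Y μ := integrable_finset_sum _ fun j _ => (hmom' j).1
  have hYle : ∫ ω, Y ω ∂μ ≤ (n : ℝ) * B ^ q := by
    rw [hYdef]
    rw [integral_finset_sum _ fun j _ => (hmom' j).1]
    calc ∑ j : Fin n, ∫ ω, |z j ω| ^ q ∂μ ≤ ∑ _j : Fin n, B ^ q :=
          Finset.sum_le_sum fun j _ => (hmom' j).2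
      _ = (n : ℝ) * B ^ q := by
          rw [Finset.sum_const, Finset.card_univ, Fintype.card_fin, nsmul_eq_mul]
  have hpw : ∀ ω, (∑ i ∈ Finset.univ.filter (fun i : Fin n => (i : ℕ) < s),
      (decRearrange (fun j => z j ω) i) ^ 2) ≤ (s : ℝ) ^ (1 - c) * (Y ω) ^ c :=
    fun ω => pointwise_bound (fun j => z j ω) hq2
  have hgint : Integrable (fun ω => (s : ℝ) ^ (1 - c) * (Y ω) ^ c) μ :=
    (integrable_rpow_of_le_one hYnn hYmeas hYint hc0 hc1).const_mul _
  have h1 : (∫ ω, ∑ i ∈ Finset.univ.filter (fun i : Fin n => (i : ℕ) < s),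
      (decRearrange (fun j => z j ω) i) ^ 2 ∂μ)
      ≤ ∫ ω, (s : ℝ) ^ (1 - c) * (Y ω) ^ c ∂μ := by
    by_cases hf : Integrable (fun ω => ∑ i ∈ Finset.univ.filter
        (fun i : Fin n => (i : ℕ) < s), (decRearrange (fun j => z j ω) i) ^ 2) μ
    · exact integral_mono hf hgint hpw
    · rw [integral_undef hf]
      exact integral_nonneg fun ω => by positivity
  have h2 : ∫ ω, (s : ℝ) ^ (1 - c) * (Y ω) ^ c ∂μ
      = (s : ℝ) ^ (1 - c) * ∫ ω, (Y ω) ^ c ∂μ := integral_const_mul _ _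
  have h3 : ∫ ω, (Y ω) ^ c ∂μ ≤ (∫ ω, Y ω ∂μ) ^ c :=
    integral_rpow_le_rpow_integral hYnn hYmeas hYint hc0 hc1
  have h4 : (∫ ω, Y ω ∂μ) ^ c ≤ ((n : ℝ) * B ^ q) ^ c :=
    Real.rpow_le_rpow (integral_nonneg hYnn) hYle (le_of_lt hc0)
  -- arithmetic computation
  have hBq : (B ^ q) ^ c = lam ^ 2 * q := by
    rw [← Real.rpow_mul hB]
    have hqc : q * c = 2 := by rw [hc]; field_simp
    rw [hqc, show ((2 : ℝ) = ((2 : ℕ) : ℝ)) by norm_num, Real.rpow_natCast, hBdef,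
      mul_pow, Real.sq_sqrt (le_of_lt hq0)]
  have hns' : ((n : ℝ) / s) ^ c = Real.exp 1 := by
    rw [Real.rpow_def_of_pos (by positivity)]
    congr 1
    rw [hc, hq]
    have hL0 : L ≠ 0 := by linarith
    field_simp
    ring
  have hscpos : (0 : ℝ) < (s : ℝ) ^ c := Real.rpow_pos_of_pos hs0 c
  have hdiv : (n : ℝ) ^ c / (s : ℝ) ^ c = Real.exp 1 := by
    rw [← Real.div_rpow (le_of_lt hn0) (le_of_lt hs0)]
    exact hns'
  have hnc : (n : ℝ) ^ c = Real.exp 1 * (s : ℝ) ^ c := by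
    rw [← hdiv]
    field_simp
  have harith : (s : ℝ) ^ (1 - c) * ((n : ℝ) * B ^ q) ^ c
      = Real.exp 1 * lam ^ 2 * ((s : ℝ) * q) := by
    rw [Real.mul_rpow (le_of_lt hn0) (Real.rpow_nonneg hB q), hBq, hnc,
      Real.rpow_sub hs0, Real.rpow_one]
    field_simp
  have hfin : (∫ ω, ∑ i ∈ Finset.univ.filter (fun i : Fin n => (i : ℕ) < s),
      (decRearrange (fun j => z j ω) i) ^ 2 ∂μ)
      ≤ 2 * Real.exp 1 * (lam ^ 2 * ((s : ℝ) * L)) := by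
    refine (h1.trans (le_of_eq h2)).trans ?_
    calc (s : ℝ) ^ (1 - c) * ∫ ω, (Y ω) ^ c ∂μ
        ≤ (s : ℝ) ^ (1 - c) * ((n : ℝ) * B ^ q) ^ c := by
          apply mul_le_mul_of_nonneg_left (h3.trans h4) (Real.rpow_nonneg hs0.le _)
      _ = Real.exp 1 * lam ^ 2 * ((s : ℝ) * q) := harith
      _ = 2 * Real.exp 1 * (lam ^ 2 * ((s : ℝ) * L)) := by rw [hq]; ring
  have hfnn : 0 ≤ ∫ ω, ∑ i ∈ Finset.univ.filter (fun i : Fin n => (i : ℕ) < s),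
      (decRearrange (fun j => z j ω) i) ^ 2 ∂μ :=
    integral_nonneg fun ω => Finset.sum_nonneg fun i _ => sq_nonneg _
  have hstep := Real.rpow_le_rpow hfnn hfin (by norm_num : (0:ℝ) ≤ 1/2)
  refine hstep.trans ?_
  rw [← Real.sqrt_eq_rpow]
  have hsL : 0 ≤ (s : ℝ) * L := by nlinarith
  have e1 : Real.sqrt (2 * Real.exp 1 * (lam ^ 2 * ((s : ℝ) * L)))
      = Real.sqrt (2 * Real.exp 1) * (lam * Real.sqrt ((s : ℝ) * L)) := by
    rw [Real.sqrt_mul (by positivity), Real.sqrt_mul (sq_nonneg lam),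
      Real.sqrt_sq (le_of_lt hlam)]
  rw [e1]
  have e2 : Real.sqrt (2 * Real.exp 1) ≤ 4 := by
    have h16 : 2 * Real.exp 1 ≤ 16 := by
      have := Real.exp_one_lt_d9
      linarith
    calc Real.sqrt (2 * Real.exp 1) ≤ Real.sqrt 16 := Real.sqrt_le_sqrt h16
      _ = 4 := by
        rw [show (16 : ℝ) = 4 ^ 2 by norm_num, Real.sqrt_sq (by norm_num)]
  calc Real.sqrt (2 * Real.exp 1) * (lam * Real.sqrt ((s : ℝ) * L))
      ≤ 4 * (lam * Real.sqrt ((s : ℝ) * L)) :=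
        mul_le_mul_of_nonneg_right e2 (by positivity)
    _ = 4 * lam * Real.sqrt ((s : ℝ) * L) := by ring
end

section
/- Let n, d be positive integers, j ∈ [n], λ > 0, and let v ∈ ℝ^d be a fixed nonzero vector. Let d₁, …, d_n be i.i.d. random vectors in ℝ^d such that, with p := log(e·n/j), the moment bound ‖⟨d₁, v⟩‖_{L^p} ≤ λ·√p·‖v‖₂ holds. Then for every real u ≥ e, the probability that the j-th largest value among |⟨d₁, v⟩|, …, |⟨d_n, v⟩| is at least u·λ·‖v‖₂·√(log(e·n/j)) is at most (e/u)^{j·log(e·n/j)}. -/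
open MeasureTheory ProbabilityTheory Finset

private lemma exists_card_ge {n j : ℕ} (hj : 1 ≤ j) (hjn : j ≤ n) (w : Fin n → ℝ) (t : ℝ)
    (h : t ≤ decRearrange w ⟨j - 1, by omega⟩) :
    ∃ S : Finset (Fin n), S.card = j ∧ ∀ i ∈ S, t ≤ |w i| := by
  set σ := Tuple.sort (fun i => -|w i|) with hσ
  have hm : Monotone ((fun i => -|w i|) ∘ σ) := Tuple.monotone_sort _
  set J : Fin n := ⟨j - 1, by omega⟩ with hJ
  refine ⟨(Finset.Iic J).image σ, ?_, ?_⟩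
  · rw [Finset.card_image_of_injective _ (Equiv.injective σ), Fin.card_Iic]
    simp only [hJ]
    omega
  · intro i hi
    obtain ⟨k, hk, rfl⟩ := Finset.mem_image.1 hi
    have hk' : k ≤ J := Finset.mem_Iic.1 hk
    have h1 := hm hk'
    have h2 : |w (σ J)| ≤ |w (σ k)| := by simpa using h1
    exact le_trans h h2

private lemma choose_le_epow {n j : ℕ} (hj : 1 ≤ j) :
    (n.choose j : ℝ) ≤ (Real.exp 1 * n / j) ^ j := by
  have hjR : (0:ℝ) < j := by exact_mod_cast hj
  have hfac : (((Nat.factorial j) : ℕ) : ℝ) ≠ 0 := Nat.cast_ne_zero.2 (Nat.factorial_ne_zero j)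
  have h1 : ((j:ℝ) ^ j / (Nat.factorial j)) ≤ Real.exp j := by
    calc ((j:ℝ) ^ j / (Nat.factorial j)) ≤ ∑ i ∈ Finset.range (j + 1), (j:ℝ) ^ i / (Nat.factorial i) :=
          Finset.single_le_sum (f := fun i => (j:ℝ) ^ i / (Nat.factorial i : ℝ)) (fun i _ => by positivity) (Finset.self_mem_range_succ j)
      _ ≤ Real.exp j := Real.sum_le_exp_of_nonneg (Nat.cast_nonneg j) _
  have h2 : (n.choose j : ℝ) ≤ (n:ℝ) ^ j / (Nat.factorial j) := Nat.choose_le_pow_div j n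
  have h3 : (n:ℝ) ^ j / (Nat.factorial j) = ((j:ℝ) ^ j / (Nat.factorial j)) * ((n:ℝ) ^ j / (j:ℝ) ^ j) := by
    field_simp
  have h4 : (n:ℝ) ^ j / (Nat.factorial j) ≤ Real.exp j * ((n:ℝ) ^ j / (j:ℝ) ^ j) := by
    rw [h3]
    exact mul_le_mul_of_nonneg_right h1 (by positivity)
  have h5 : Real.exp j * ((n:ℝ) ^ j / (j:ℝ) ^ j) = (Real.exp 1 * n / j) ^ j := by
    rw [div_pow, mul_pow, Real.exp_one_pow]
    ring
  linarith

/-- Tail bound for the `j`-th largest marginal: if `d₁, …, d_n` are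
i.i.d. random vectors with `‖⟨d₁, v⟩‖_{L^p} ≤ λ·√p·‖v‖₂` for `p = log(e·n/j)`, then
for `u ≥ e`, the `j`-th largest of `|⟨dᵢ, v⟩|` exceeds `u·λ·‖v‖₂·√(log(e·n/j))` with
probability at most `(e/u)^{j·log(e·n/j)}`. -/
theorem stmt16 :
    ∀ (n d j : ℕ) (_hn : 0 < n) (_hd : 0 < d) (hj : 1 ≤ j) (hjn : j ≤ n),
    ∀ lam : ℝ, 0 < lam →
    ∀ v : Fin d → ℝ, v ≠ 0 →
    ∀ (Ω : Type) (_ : MeasurableSpace Ω) (μ : Measure Ω), IsProbabilityMeasure μ →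
    ∀ ds : Fin n → Ω → Fin d → ℝ, (∀ i, Measurable (ds i)) →
      -- the `dᵢ` are i.i.d.
      iIndepFun ds μ →
      (∀ i i', Measure.map (ds i) μ = Measure.map (ds i') μ) →
      -- moment bound at level `p = log (e·n/j)`
      (∀ i, eLpNorm (fun ω => ∑ t, ds i ω t * v t)
          (ENNReal.ofReal (Real.log (Real.exp 1 * n / j))) μ ≤
        ENNReal.ofReal (lam * Real.sqrt (Real.log (Real.exp 1 * n / j)) *
          Real.sqrt (∑ t, v t ^ 2))) →
    ∀ u : ℝ, Real.exp 1 ≤ u →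
      μ {ω | u * lam * Real.sqrt (∑ t, v t ^ 2) *
            Real.sqrt (Real.log (Real.exp 1 * n / j)) ≤
          decRearrange (fun i => ∑ t, ds i ω t * v t) ⟨j - 1, by omega⟩} ≤
        ENNReal.ofReal
          ((Real.exp 1 / u) ^ ((j : ℝ) * Real.log (Real.exp 1 * n / j))) := by
  intro n d j hn hd hj hjn lam hlam v hv Ω mΩ μ hμ ds hds hind hident hmom u hu
  classical
  have he : (0:ℝ) < Real.exp 1 := Real.exp_pos 1
  have hu0 : (0:ℝ) < u := lt_of_lt_of_le he hu
  have hjR : (0:ℝ) < j := by exact_mod_cast hj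
  have hjnR : (j:ℝ) ≤ n := by exact_mod_cast hjn
  have hbase : Real.exp 1 ≤ Real.exp 1 * n / j := by
    rw [le_div_iff₀ hjR]
    nlinarith
  have hbase0 : (0:ℝ) < Real.exp 1 * n / j := lt_of_lt_of_le he hbase
  set p := Real.log (Real.exp 1 * n / j) with hpdef
  have hp1 : 1 ≤ p := by
    rw [hpdef, Real.le_log_iff_exp_le hbase0]
    exact hbase
  have hp0 : (0:ℝ) < p := lt_of_lt_of_le one_pos hp1
  have hexp_p : Real.exp p = Real.exp 1 * n / j := Real.exp_log hbase0
  have hsum : 0 < ∑ t, v t ^ 2 := by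
    obtain ⟨t, ht⟩ := Function.ne_iff.1 hv
    exact Finset.sum_pos' (fun i _ => sq_nonneg _)
      ⟨t, Finset.mem_univ t, lt_of_le_of_ne (sq_nonneg _) (Ne.symm (pow_ne_zero 2 ht))⟩
  set nv := Real.sqrt (∑ t, v t ^ 2) with hnv
  have hnv0 : 0 < nv := Real.sqrt_pos.2 hsum
  have hsp0 : 0 < Real.sqrt p := Real.sqrt_pos.2 hp0
  set t0 := u * lam * nv * Real.sqrt p with ht0def
  have ht0 : 0 < t0 := by positivity
  -- the scalar random variables
  set g : (Fin d → ℝ) → ℝ := fun w => ∑ t, w t * v t with hg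
  have hgm : Measurable g :=
    Finset.measurable_sum _ fun t _ => (measurable_pi_apply t).mul_const _
  set X : Fin n → Ω → ℝ := fun i => g ∘ ds i with hX
  have hXm : ∀ i, Measurable (X i) := fun i => hgm.comp (hds i)
  have hXind : iIndepFun X μ :=
    hind.comp (fun _ => g) (fun _ => hgm)
  set A : Set ℝ := {x | t0 ≤ |x|} with hA
  have hAm : MeasurableSet A := measurableSet_le measurable_const measurable_id.abs
  -- Markov bound for each coordinate
  have hq : ∀ i, μ (X i ⁻¹' A) ≤ ENNReal.ofReal (u⁻¹ ^ p) := by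
    intro i
    have hset : X i ⁻¹' A = {ω | ENNReal.ofReal t0 ≤ (‖X i ω‖₊ : ENNReal)} := by
      ext ω
      simp only [Set.mem_preimage, hA, Set.mem_setOf_eq, ← enorm_eq_nnnorm, ← ofReal_norm,
        Real.norm_eq_abs]
      exact (ENNReal.ofReal_le_ofReal_iff (abs_nonneg _)).symm
    have hpne : (ENNReal.ofReal p) ≠ 0 := by
      simp [ENNReal.ofReal_eq_zero, not_le, hp0]
    have hεne : (ENNReal.ofReal t0) ≠ 0 := by
      simp [ENNReal.ofReal_eq_zero, not_le, ht0]
    have hmark := meas_ge_le_mul_pow_eLpNorm_enorm (μ := μ) hpne ENNReal.ofReal_ne_top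
      (hXm i).aestronglyMeasurable hεne (fun h => absurd h ENNReal.ofReal_ne_top)
    rw [hset]
    refine le_trans hmark ?_
    rw [ENNReal.toReal_ofReal hp0.le]
    have hle : eLpNorm (X i) (ENNReal.ofReal p) μ ≤
        ENNReal.ofReal (lam * Real.sqrt p * nv) := hmom i
    calc (ENNReal.ofReal t0)⁻¹ ^ p * eLpNorm (X i) (ENNReal.ofReal p) μ ^ p
        ≤ (ENNReal.ofReal t0)⁻¹ ^ p * ENNReal.ofReal (lam * Real.sqrt p * nv) ^ p :=
          mul_le_mul_right (ENNReal.rpow_le_rpow hle hp0.le) _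
      _ = ENNReal.ofReal (u⁻¹ ^ p) := by
          rw [← ENNReal.ofReal_inv_of_pos ht0,
            ENNReal.ofReal_rpow_of_pos (by positivity),
            ENNReal.ofReal_rpow_of_pos (by positivity),
            ← ENNReal.ofReal_mul (by positivity),
            ← Real.mul_rpow (by positivity) (by positivity)]
          congr 2
          rw [ht0def]
          field_simp
  -- the union bound
  set 𝒮 := Finset.powersetCard j (Finset.univ : Finset (Fin n)) with h𝒮
  have hincl : {ω | t0 ≤ decRearrange (fun i => ∑ t, ds i ω t * v t) ⟨j - 1, by omega⟩} ⊆
      ⋃ S ∈ 𝒮, ⋂ i ∈ S, X i ⁻¹' A := by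
    intro ω hω
    obtain ⟨S, hScard, hSall⟩ :=
      exists_card_ge hj hjn (fun i => ∑ t, ds i ω t * v t) t0 hω
    refine Set.mem_iUnion₂.2 ⟨S, Finset.mem_powersetCard.2 ⟨Finset.subset_univ _, hScard⟩, ?_⟩
    exact Set.mem_iInter₂.2 fun i hi => hSall i hi
  calc μ {ω | t0 ≤ decRearrange (fun i => ∑ t, ds i ω t * v t) ⟨j - 1, by omega⟩}
      ≤ μ (⋃ S ∈ 𝒮, ⋂ i ∈ S, X i ⁻¹' A) := measure_mono hincl
    _ ≤ ∑ S ∈ 𝒮, μ (⋂ i ∈ S, X i ⁻¹' A) := measure_biUnion_finset_le 𝒮 _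
    _ ≤ ∑ _S ∈ 𝒮, ENNReal.ofReal (u⁻¹ ^ p) ^ j := by
        refine Finset.sum_le_sum fun S hS => ?_
        have hcard := (Finset.mem_powersetCard.1 hS).2
        rw [hXind.meas_biInter (fun i _ => ⟨A, hAm, rfl⟩)]
        calc ∏ i ∈ S, μ (X i ⁻¹' A) ≤ ∏ _i ∈ S, ENNReal.ofReal (u⁻¹ ^ p) :=
              Finset.prod_le_prod' fun i _ => hq i
          _ = ENNReal.ofReal (u⁻¹ ^ p) ^ j := by rw [Finset.prod_const, hcard]
    _ = (n.choose j : ENNReal) * ENNReal.ofReal (u⁻¹ ^ p) ^ j := by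
        rw [Finset.sum_const, h𝒮, Finset.card_powersetCard, Finset.card_univ,
          Fintype.card_fin, nsmul_eq_mul]
    _ ≤ ENNReal.ofReal ((Real.exp 1 / u) ^ ((j : ℝ) * p)) := by
        rw [← ENNReal.ofReal_natCast (n.choose j),
          ← ENNReal.ofReal_pow (by positivity),
          ← ENNReal.ofReal_mul (by positivity)]
        apply ENNReal.ofReal_le_ofReal
        have hrw : (Real.exp 1 / u) ^ ((j:ℝ) * p) =
            ((Real.exp 1 * n / j) * u⁻¹ ^ p) ^ j := by
          rw [mul_comm (j:ℝ) p, Real.rpow_mul (div_nonneg he.le hu0.le),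
            Real.rpow_natCast]
          congr 1
          rw [div_eq_mul_inv, Real.mul_rpow he.le (inv_nonneg.2 hu0.le),
            Real.exp_one_rpow, hexp_p]
        rw [hrw, mul_pow]
        exact mul_le_mul_of_nonneg_right (choose_le_epow hj) (by positivity)
end
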